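/- Let A : [0,∞)^n → [0,∞) be an aggregation function such that A* is finite-valued and strictly directionally convex. Then A(x) = A*(x) for every x ∈ [0,∞)^n. -/

import Mathlib

open scoped NNReal

namespace SDC17


variable {n : ℕ}

def dSet (A : (Fin n → ℝ≥0) → ℝ≥0) (x : Fin n → ℝ≥0) : Set ℝ≥0 :=
  {s : ℝ≥0 | ∃ (k : ℕ) (c : Fin k → (Fin n → ℝ≥0)), 1 ≤ k ∧
    (∑ j, c j) ≤ x ∧ s = ∑ j, A (c j)}

theorem mem_dSet {A : (Fin n → ℝ≥0) → ℝ≥0} {x : Fin n → ℝ≥0} {m : ℕ}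
    (d : Fin m → (Fin n → ℝ≥0)) (hm : 1 ≤ m) (hd : (∑ j, d j) ≤ x) :
    (∑ j, A (d j)) ∈ dSet A x := ⟨m, d, hm, hd, rfl⟩

section

variable {A Astar : (Fin n → ℝ≥0) → ℝ≥0}
variable (hstar : ∀ x : Fin n → ℝ≥0, IsLUB (dSet A x) (Astar x))

include hstar

theorem le_star (x : Fin n → ℝ≥0) {s : ℝ≥0} (hs : s ∈ dSet A x) : s ≤ Astar x :=
  (hstar x).1 hs

theorem A_le_star (x : Fin n → ℝ≥0) : A x ≤ Astar x := by
  have h := mem_dSet (A := A) (x := x) (fun _ : Fin 1 => x) le_rfl (by simp)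
  simpa using le_star hstar x h

theorem star_mono : Monotone Astar := by
  intro a b hab
  refine (hstar a).2 ?_
  rintro s ⟨k, c, hk, hc, rfl⟩
  exact le_star hstar b (mem_dSet c hk (hc.trans hab))

theorem star_zero (hA0 : A 0 = 0) : Astar 0 = 0 := by
  refine le_antisymm ((hstar 0).2 ?_) (zero_le)
  rintro s ⟨k, c, hk, hc, rfl⟩
  have hc0 : ∀ j, c j = 0 := by
    have h : (∑ j, c j) = 0 := le_antisymm hc (zero_le)
    intro j
    exact (Finset.sum_eq_zero_iff.mp h) j (Finset.mem_univ j)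
  simp [hc0, hA0]

theorem star_superadd (a b : Fin n → ℝ≥0) : Astar a + Astar b ≤ Astar (a + b) := by
  have key : ∀ s ∈ dSet A a, ∀ t ∈ dSet A b, s + t ∈ dSet A (a + b) := by
    rintro s ⟨k, c, hk, hc, rfl⟩ t ⟨l, d, hl, hd, rfl⟩
    have h1 : (∑ j, Fin.append c d j) = (∑ j, c j) + ∑ j, d j := by
      simp [Fin.sum_univ_add]
    have h2 : (∑ j, A (Fin.append c d j)) = (∑ j, A (c j)) + ∑ j, A (d j) := by
      simp [Fin.sum_univ_add]
    have := mem_dSet (A := A) (x := a + b) (Fin.append c d)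
      (le_trans hk (Nat.le_add_right k l)) (h1 ▸ add_le_add hc hd)
    rwa [h2] at this
  have hmono := star_mono hstar
  have h1 : ∀ t ∈ dSet A b, Astar a + t ≤ Astar (a + b) := by
    intro t ht
    have h2 : ∀ s ∈ dSet A a, s ≤ Astar (a + b) - t := fun s hs =>
      le_tsub_of_add_le_right (le_star hstar _ (key s hs t ht))
    have h3 := (hstar a).2 h2
    have ht' : t ≤ Astar (a + b) := by
      obtain ⟨l, d, hl, hd, rfl⟩ := ht
      exact le_star hstar _ (mem_dSet d hl (hd.trans le_add_self))
    exact add_comm t (Astar a) ▸ (le_tsub_iff_right ht').mp h3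
  have h3 : ∀ t ∈ dSet A b, t ≤ Astar (a + b) - Astar a := fun t ht =>
    le_tsub_of_add_le_left (h1 t ht)
  have h4 := (hstar b).2 h3
  have ha' : Astar a ≤ Astar (a + b) := hmono le_self_add
  exact (le_tsub_iff_left ha').mp h4

theorem star_nsmul (m : ℕ) (z : Fin n → ℝ≥0) :
    (m : ℝ≥0) * Astar z ≤ Astar (m • z) := by
  induction m with
  | zero => simp
  | succ m ih =>
    have h1 : ((m + 1 : ℕ) : ℝ≥0) * Astar z = (m : ℝ≥0) * Astar z + Astar z := by
      push_cast; ring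
    rw [h1, succ_nsmul]
    exact le_trans (add_le_add ih le_rfl) (star_superadd hstar _ _)

end


variable {A Astar : (Fin n → ℝ≥0) → ℝ≥0}

theorem Wlem
    (hconv : ∀ u v x y : Fin n → ℝ≥0, u < x → u < y → x < v → y < v → u + v = x + y →
      Astar x + Astar y < Astar u + Astar v)
    (a b h : Fin n → ℝ≥0) (hab : a ≤ b) :
    Astar (a + h) + Astar b ≤ Astar a + Astar (b + h) := by
  rcases eq_or_ne h 0 with rfl | hh
  · simp [add_comm]
  rcases eq_or_ne a b with rfl | hne
  · rw [add_comm (Astar (a + h))]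
  have hpos : 0 < h := pos_iff_ne_zero.mpr hh
  have hab' : a < b := lt_of_le_of_ne hab hne
  exact le_of_lt (hconv a (b + h) (a + h) b (lt_add_of_pos_right a hpos) hab'
    (add_lt_add_left hab' h) (lt_add_of_pos_right b hpos) (by ring))

theorem gapmono
    (hconv : ∀ u v x y : Fin n → ℝ≥0, u < x → u < y → x < v → y < v → u + v = x + y →
      Astar x + Astar y < Astar u + Astar v)
    (a b u v : Fin n → ℝ≥0) :
    Astar (a + u) + Astar (b + v) + Astar (a + b) ≤
      Astar a + Astar b + Astar (a + u + (b + v)) := by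
  have W1 := Wlem hconv a (a + b + v) u (by simp [add_assoc])
  have W2 := Wlem hconv b (a + b) v le_add_self
  have e : a + b + v + u = a + u + (b + v) := by ring
  rw [e] at W1
  have h2 : Astar (a + u) + Astar (b + v) + Astar (a + b) + Astar (a + b + v) ≤
      Astar a + Astar b + Astar (a + u + (b + v)) + Astar (a + b + v) := by
    calc Astar (a + u) + Astar (b + v) + Astar (a + b) + Astar (a + b + v)
        = (Astar (a + u) + Astar (a + b + v)) + (Astar (b + v) + Astar (a + b)) := by ring
      _ ≤ (Astar a + Astar (a + u + (b + v))) + (Astar b + Astar (a + b + v)) :=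
          add_le_add W1 W2
      _ = Astar a + Astar b + Astar (a + u + (b + v)) + Astar (a + b + v) := by ring
  exact le_of_add_le_add_right h2


theorem group_le
    (hstar : ∀ x : Fin n → ℝ≥0, IsLUB (dSet A x) (Astar x))
    {k : ℕ} (c : Fin k → (Fin n → ℝ≥0)) (G : Finset (Fin k)) :
    (∑ j ∈ G, A (c j)) ≤ Astar (∑ j ∈ G, c j) := by
  rcases G.eq_empty_or_nonempty with rfl | hG
  · simp
  have hcard : 1 ≤ G.card := hG.card_pos
  set e := G.equivFin with he
  have h1 : ∀ (M : Type) (_ : AddCommMonoid M) (g : Fin k → M),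
      (∑ j ∈ G, g j) = ∑ i : Fin G.card, g ((e.symm i) : Fin k) := by
    intro M _ g
    rw [← Finset.sum_coe_sort G g, ← Equiv.sum_comp e.symm (fun j : G => g (j : Fin k))]
  have hmem := mem_dSet (A := A) (x := ∑ j ∈ G, c j)
    (fun i : Fin G.card => c ((e.symm i) : Fin k)) hcard
    (le_of_eq (h1 _ _ c).symm)
  rw [h1 ℝ≥0 _ (fun j => A (c j))]
  exact (hstar _).1 hmem

end SDC17

open SDC17 in
theorem eq_superTransform_of_strictDirectionallyConvex
    (n : ℕ) (A Astar : (Fin n → ℝ≥0) → ℝ≥0)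
    (hA0 : A 0 = 0) (hmono : Monotone A)
    (hstar : ∀ x : Fin n → ℝ≥0,
      IsLUB {s : ℝ≥0 | ∃ (k : ℕ) (c : Fin k → (Fin n → ℝ≥0)), 1 ≤ k ∧
        (∑ j, c j) ≤ x ∧ s = ∑ j, A (c j)} (Astar x))
    (hconv : ∀ u v x y : Fin n → ℝ≥0, u < x → u < y → x < v → y < v → u + v = x + y →
      Astar x + Astar y < Astar u + Astar v) :
    ∀ x : Fin n → ℝ≥0, A x = Astar x := by
  classical
  have hstar' : ∀ y : Fin n → ℝ≥0, IsLUB (dSet A y) (Astar y) := hstar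
  intro x
  refine le_antisymm (A_le_star hstar' x) ?_
  by_contra hlt'
  have hAx : A x < Astar x := not_le.mp hlt'
  have hx0 : x ≠ 0 := by
    rintro rfl
    rw [star_zero hstar' hA0] at hAx
    exact absurd hAx (by simp)
  set δ : ℝ≥0 := Astar x - A x with hδ
  have hδpos : 0 < δ := tsub_pos_of_lt hAx
  have hδ2pos : 0 < δ / 2 := by positivity
  have hAδ : A x + δ = Astar x := add_tsub_cancel_of_le hAx.le
  have hhalf : δ / 2 + δ / 2 = δ := by
    rw [← two_mul]; rw [mul_div_cancel₀]; norm_num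
  -- choose K
  obtain ⟨K0, hK0⟩ := Archimedean.arch (Astar x) hδ2pos
  set K := K0 + 1 with hK
  set κ : ℝ≥0 := (K : ℝ≥0) with hκ
  have hκ0 : κ ≠ 0 := Nat.cast_ne_zero.mpr (Nat.succ_ne_zero K0)
  set α : Fin n → ℝ≥0 := fun i => x i / (4 * κ) with hα
  set zK : Fin n → ℝ≥0 := fun i => 4 * α i with hzK
  have hKz : K • zK = x := by
    funext i
    have h4 : (4 : ℝ≥0) * κ ≠ 0 := by positivity
    simp only [Pi.smul_apply, hzK, hα, smul_eq_mul]
    field_simp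
    rw [nsmul_eq_mul, ← hκ]
    field_simp
  have hfzK : Astar zK ≤ δ / 2 := by
    have h1 : (K : ℝ≥0) * Astar zK ≤ Astar x := hKz ▸ star_nsmul hstar' K zK
    have h2 : Astar x ≤ (K : ℝ≥0) * (δ / 2) := by
      calc Astar x ≤ K0 • (δ / 2) := hK0
        _ = (K0 : ℝ≥0) * (δ / 2) := by rw [nsmul_eq_mul]
        _ ≤ (K : ℝ≥0) * (δ / 2) := by
            gcongr
            exact_mod_cast Nat.le_succ K0
    refine le_of_mul_le_mul_left (h1.trans h2) ?_
    exact_mod_cast Nat.succ_pos K0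
  -- the finite set of coordinates and gamma
  set J : Finset (Fin n) := Finset.univ.filter (fun i => x i ≠ 0) with hJ
  have hJne : J.Nonempty := by
    obtain ⟨i, hi⟩ := Function.ne_iff.mp hx0
    exact ⟨i, Finset.mem_filter.mpr ⟨Finset.mem_univ _, by simpa using hi⟩⟩
  set sg : Fin n → (Fin n → ℝ≥0) := fun i => Pi.single i (α i) with hsg
  have hPne : (J ×ˢ J).Nonempty := hJne.product hJne
  set g : Fin n × Fin n → ℝ≥0 :=
    fun p => Astar (sg p.1 + sg p.2) - (Astar (sg p.1) + Astar (sg p.2)) with hg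
  set γ : ℝ≥0 := (J ×ˢ J).inf' hPne g with hγ
  have hαpos : ∀ i ∈ J, 0 < α i := by
    intro i hi
    have hxi : x i ≠ 0 := (Finset.mem_filter.mp hi).2
    have : (0:ℝ≥0) < x i := pos_iff_ne_zero.mpr hxi
    rw [hα]
    positivity
  have hsgpos : ∀ i ∈ J, 0 < sg i := by
    intro i hi
    refine lt_of_le_of_ne (zero_le) (fun h => ?_)
    have := congrFun h i
    rw [hsg] at this
    simp only [Pi.zero_apply, Pi.single_eq_same] at this
    exact absurd this.symm (ne_of_gt (hαpos i hi))
  have hγpos : 0 < γ := by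
    rw [hγ, Finset.lt_inf'_iff]
    rintro ⟨i, j⟩ hij
    rw [Finset.mem_product] at hij
    obtain ⟨hi, hj⟩ := hij
    have h1 : Astar (sg i) + Astar (sg j) < Astar (sg i + sg j) := by
      have := hconv 0 (sg i + sg j) (sg i) (sg j) (hsgpos i hi) (hsgpos j hj)
        (lt_add_of_pos_right _ (hsgpos j hj)) (lt_add_of_pos_left _ (hsgpos i hi))
        (zero_add _)
      rwa [star_zero hstar' hA0, zero_add] at this
    exact tsub_pos_of_lt h1
  have hγle : ∀ i ∈ J, ∀ j ∈ J,
      γ + (Astar (sg i) + Astar (sg j)) ≤ Astar (sg i + sg j) := by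
    intro i hi j hj
    have h1 : γ ≤ g (i, j) := Finset.inf'_le _ (Finset.mem_product.mpr ⟨hi, hj⟩)
    have h2 : Astar (sg i) + Astar (sg j) ≤ Astar (sg i + sg j) := star_superadd hstar' _ _
    calc γ + (Astar (sg i) + Astar (sg j))
        ≤ (Astar (sg i + sg j) - (Astar (sg i) + Astar (sg j))) +
            (Astar (sg i) + Astar (sg j)) := add_le_add_left h1 _
      _ = Astar (sg i + sg j) := tsub_add_cancel_of_le h2
  set η : ℝ≥0 := min (δ / 2) γ with hη
  have hηpos : 0 < η := lt_min hδ2pos hγpos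
  -- main upper bound
  have hub : ∀ s ∈ dSet A x, s + η ≤ Astar x := by
    rintro s ⟨k, c, hk, hc, rfl⟩
    set σ : Fin n → ℝ≥0 := ∑ j, c j with hσ
    have hcx : ∀ j, c j ≤ x := fun j =>
      le_trans (Finset.single_le_sum (fun j _ => zero_le) (Finset.mem_univ j)) hc
    set w : Fin k → (Fin n → ℝ≥0) := fun j => ∑ i ∈ Finset.univ.erase j, c i with hw
    have hwσ : ∀ j, c j + w j = σ := fun j => Finset.add_sum_erase _ _ (Finset.mem_univ j)
    by_cases hcase : ∃ j, w j ≤ zK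
    · -- case (a): all but one piece is tiny
      obtain ⟨j0, hj0⟩ := hcase
      have h1 : (∑ j, A (c j)) = A (c j0) + ∑ i ∈ Finset.univ.erase j0, A (c i) :=
        (Finset.add_sum_erase _ _ (Finset.mem_univ j0)).symm
      have h2 : (∑ i ∈ Finset.univ.erase j0, A (c i)) ≤ Astar (w j0) :=
        group_le hstar' c _
      have h3 : Astar (w j0) ≤ δ / 2 := le_trans (star_mono hstar' hj0) hfzK
      have h4 : A (c j0) ≤ A x := hmono (hcx j0)
      calc (∑ j, A (c j)) + η ≤ (A x + δ / 2) + (δ / 2) := by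
            rw [h1]
            exact add_le_add (add_le_add h4 (h2.trans h3)) (min_le_left _ _)
        _ = A x + δ := by rw [add_assoc, hhalf]
        _ = Astar x := hAδ
    · -- case (b): every piece has a big complement
      push_neg at hcase
      have key : ∃ (G : Finset (Fin k)) (i1 i2 : Fin n), i1 ∈ J ∧ i2 ∈ J ∧
          sg i1 ≤ ∑ j ∈ G, c j ∧ sg i2 ≤ ∑ j ∈ Gᶜ, c j := by
        have hk0 : 0 < k := hk
        have hσx : σ ≤ x := hc
        have hwle : ∀ j, w j ≤ σ := by
          intro j
          conv_rhs => rw [← hwσ j]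
          exact le_add_self
        have hJmem : ∀ i : Fin n, ∀ y : Fin n → ℝ≥0, y ≤ σ → 0 < y i → i ∈ J := by
          intro i y hy hyi
          have : 0 < x i := lt_of_lt_of_le hyi (le_trans (hy i) (hσx i))
          exact Finset.mem_filter.mpr ⟨Finset.mem_univ _, ne_of_gt this⟩
        have hsingle_le : ∀ (i : Fin n) (y : Fin n → ℝ≥0), α i ≤ y i → sg i ≤ y := by
          intro i y hyi m
          rw [hsg]
          rcases eq_or_ne m i with rfl | hmi
          · simpa using hyi
          · simp [Pi.single_eq_of_ne hmi]
        by_cases hbig : ∃ j i, 2 * α i < c j i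
        · -- one single big piece
          obtain ⟨j1, i1, hb1⟩ := hbig
          have hci1 : 0 < c j1 i1 := lt_of_le_of_lt (zero_le) hb1
          have hi1J : i1 ∈ J := hJmem i1 (c j1) (by
            conv_rhs => rw [← hwσ j1]
            exact le_self_add) hci1
          obtain ⟨i2, hi2b⟩ : ∃ i, zK i < w j1 i := by
            by_contra hno
            push_neg at hno
            exact hcase j1 (fun i => hno i)
          have hwi2 : 0 < w j1 i2 := lt_of_le_of_lt (zero_le) hi2b
          have hi2J : i2 ∈ J := hJmem i2 (w j1) (hwle j1) hwi2
          refine ⟨{j1}, i1, i2, hi1J, hi2J, ?_, ?_⟩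
          · rw [Finset.sum_singleton]
            refine hsingle_le i1 (c j1) ?_
            calc α i1 ≤ 2 * α i1 := le_mul_of_one_le_left (zero_le) one_le_two
              _ ≤ c j1 i1 := hb1.le
          · rw [Finset.compl_singleton]
            refine hsingle_le i2 (w j1) ?_
            calc α i2 ≤ 4 * α i2 := le_mul_of_one_le_left (zero_le) (by norm_num)
              _ ≤ w j1 i2 := by
                  have : zK i2 = 4 * α i2 := rfl
                  rw [← this]; exact hi2b.le
        · -- all pieces small: prefix construction
          push_neg at hbig
          set j0 : Fin k := ⟨0, hk0⟩ with hj0def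
          obtain ⟨iS, hiS⟩ : ∃ i, zK i < w j0 i := by
            by_contra hno
            push_neg at hno
            exact hcase j0 (fun i => hno i)
          have hσiS : 4 * α iS < σ iS := by
            have h1 : w j0 iS ≤ σ iS := hwle j0 iS
            exact lt_of_lt_of_le hiS h1
          have hiSJ : iS ∈ J := hJmem iS σ le_rfl (lt_of_le_of_lt (zero_le) hσiS)
          have htpos : 0 < α iS := hαpos iS hiSJ
          set t : ℝ≥0 := α iS with ht
          set b : Fin k → ℝ≥0 := fun j => c j iS with hb
          have hbsmall : ∀ j, b j ≤ 2 * t := fun j => hbig j iS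
          set F : ℕ → ℝ≥0 :=
            fun r => ∑ j ∈ Finset.univ.filter (fun j : Fin k => (j : ℕ) < r), b j with hF
          have hσsum : σ iS = ∑ j, b j := by
            rw [hσ, Finset.sum_apply]
          have huniv : Finset.univ.filter (fun j : Fin k => (j : ℕ) < k) = Finset.univ :=
            Finset.filter_true_of_mem (fun j _ => j.isLt)
          have hFk : F k = σ iS := by
            rw [hσsum]
            show (∑ j ∈ Finset.univ.filter (fun j : Fin k => (j : ℕ) < k), b j) = ∑ j, b j
            rw [huniv]
          have hQk : t ≤ F k := by
            rw [hFk]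
            calc t ≤ 4 * t := le_mul_of_one_le_left (zero_le) (by norm_num)
              _ ≤ σ iS := hσiS.le
          have hex : ∃ r, t ≤ F r := ⟨k, hQk⟩
          set r := Nat.find hex with hr
          have hrt : t ≤ F r := Nat.find_spec hex
          have hrk : r ≤ k := Nat.find_min' hex hQk
          have hr0 : r ≠ 0 := by
            intro h0
            rw [h0] at hrt
            have hF0 : F 0 = 0 := by
              show (∑ j ∈ Finset.univ.filter (fun j : Fin k => (j : ℕ) < 0), b j) = 0
              simp
            rw [hF0] at hrt
            exact absurd hrt (not_le.mpr htpos)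
          have hrpred : ¬ t ≤ F (r - 1) :=
            Nat.find_min hex (Nat.sub_lt (Nat.pos_of_ne_zero hr0) one_pos)
          have hr1k : r - 1 < k := lt_of_lt_of_le (Nat.sub_lt (Nat.pos_of_ne_zero hr0) one_pos) hrk
          have hsplit : F r = b ⟨r - 1, hr1k⟩ + F (r - 1) := by
            have hins : Finset.univ.filter (fun j : Fin k => (j : ℕ) < r) =
                insert ⟨r - 1, hr1k⟩ (Finset.univ.filter (fun j : Fin k => (j : ℕ) < r - 1)) := by
              ext j
              simp only [Finset.mem_filter, Finset.mem_univ, true_and, Finset.mem_insert,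
                Fin.ext_iff]
              omega
            show (∑ j ∈ Finset.univ.filter (fun j : Fin k => (j : ℕ) < r), b j) =
              b ⟨r - 1, hr1k⟩ +
                ∑ j ∈ Finset.univ.filter (fun j : Fin k => (j : ℕ) < r - 1), b j
            rw [hins, Finset.sum_insert (by simp)]
          have hFr3 : F r < 3 * t := by
            rw [hsplit]
            calc b ⟨r - 1, hr1k⟩ + F (r - 1) < 2 * t + t :=
                add_lt_add_of_le_of_lt (hbsmall _) (not_le.mp hrpred)
              _ = 3 * t := by ring
          set G : Finset (Fin k) := Finset.univ.filter (fun j : Fin k => (j : ℕ) < r) with hG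
          have hpG : (∑ j ∈ G, c j) iS = F r := by
            rw [Finset.sum_apply]
          have hqG : (∑ j ∈ G, c j) iS + (∑ j ∈ Gᶜ, c j) iS = σ iS := by
            rw [← Pi.add_apply, Finset.sum_add_sum_compl, hσ]
          refine ⟨G, iS, iS, hiSJ, hiSJ, ?_, ?_⟩
          · exact hsingle_le iS _ (by rw [hpG]; exact hrt)
          · refine hsingle_le iS _ ?_
            by_contra hlast
            push_neg at hlast
            have : σ iS < 3 * t + t := by
              rw [← hqG, hpG]
              exact add_lt_add_of_lt_of_lt hFr3 hlast
            have h4 : (3:ℝ≥0) * t + t = 4 * t := by ring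
            rw [h4] at this
            exact absurd hσiS (not_lt.mpr this.le)
      obtain ⟨G, i1, i2, hi1, hi2, hp, hq⟩ := key
      set p : Fin n → ℝ≥0 := ∑ j ∈ G, c j with hpdef
      set q : Fin n → ℝ≥0 := ∑ j ∈ Gᶜ, c j with hqdef
      have hpq : p + q = σ := Finset.sum_add_sum_compl G c
      have hs : (∑ j, A (c j)) ≤ Astar p + Astar q := by
        rw [← Finset.sum_add_sum_compl G (fun j => A (c j))]
        exact add_le_add (group_le hstar' c G) (group_le hstar' c Gᶜ)
      obtain ⟨u, hu⟩ : ∃ u, sg i1 + u = p := ⟨p - sg i1, add_tsub_cancel_of_le hp⟩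
      obtain ⟨v, hv⟩ : ∃ v, sg i2 + v = q := ⟨q - sg i2, add_tsub_cancel_of_le hq⟩
      have hgap := gapmono hconv (sg i1) (sg i2) u v
      rw [hu, hv] at hgap
      have hγ2 := hγle i1 hi1 i2 hi2
      have h7 : Astar p + Astar q + γ ≤ Astar (p + q) := by
        have h5 : (Astar p + Astar q + γ) + (Astar (sg i1) + Astar (sg i2)) ≤
            Astar (p + q) + (Astar (sg i1) + Astar (sg i2)) := by
          calc (Astar p + Astar q + γ) + (Astar (sg i1) + Astar (sg i2))
              = (Astar p + Astar q) + (γ + (Astar (sg i1) + Astar (sg i2))) := by ring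
            _ ≤ (Astar p + Astar q) + Astar (sg i1 + sg i2) := add_le_add_right hγ2 _
            _ ≤ Astar (sg i1) + Astar (sg i2) + Astar (p + q) := hgap
            _ = Astar (p + q) + (Astar (sg i1) + Astar (sg i2)) := by ring
        exact le_of_add_le_add_right h5
      have h8 : Astar (p + q) ≤ Astar x := star_mono hstar' (le_trans (le_of_eq hpq) hc)
      calc (∑ j, A (c j)) + η ≤ (Astar p + Astar q) + γ :=
            add_le_add hs (min_le_right _ _)
        _ ≤ Astar (p + q) := h7
        _ ≤ Astar x := h8
  have hub2 : Astar x ≤ Astar x - η :=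
    (hstar' x).2 (fun s hs => le_tsub_of_add_le_right (hub s hs))
  have hlt2 : Astar x - η < Astar x :=
    tsub_lt_self (lt_of_le_of_lt (zero_le) hAx) hηpos
  exact absurd (lt_of_le_of_lt hub2 hlt2) (lt_irrefl _)
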